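/- Let n ≥ 1, let 𝒪 and 𝒪' be bounded open subsets of ℝⁿ with 𝒪' ⊆ 𝒪, and let u : ℝⁿ → ℝ be measurable and vanish almost everywhere on 𝒪 ∖ 𝒪'. Then ∬_{𝒪×𝒪} |u(x)−u(y)|²/|x−y|^{n+1} dx dy ≤ ∬_{𝒪'×𝒪'} |u(x)−u(y)|²/|x−y|^{n+1} dx dy + 2 ω_n ∫_{𝒪'} |u(x)|²/dist(x,∂𝒪') dx. -/

import Mathlib

open MeasureTheory Metric Set ENNReal

/-- The surface area `ω_n` of the unit sphere in `ℝⁿ`, as an extended nonnegative real. -/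
noncomputable def surfaceAreaUnitSphere (n : ℕ) : ℝ≥0∞ :=
  (n : ℝ≥0∞) * volume (Metric.ball (0 : EuclideanSpace ℝ (Fin n)) 1)

lemma key_kernel (n : ℕ) (hn : 1 ≤ n) (x : EuclideanSpace ℝ (Fin n)) {d : ℝ} (hd : 0 < d) :
    ∫⁻ y in (ball x d)ᶜ, ENNReal.ofReal ((dist x y ^ (n + 1))⁻¹) ≤
      surfaceAreaUnitSphere n / ENNReal.ofReal d := by
  have h0 : 0 < Module.finrank ℝ (EuclideanSpace ℝ (Fin n)) := by
    rw [finrank_euclideanSpace_fin]; omega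
  haveI := Module.nontrivial_of_finrank_pos h0
  set volB := volume (ball (0 : EuclideanSpace ℝ (Fin n)) 1) with hvolB
  have hvolBne : volB ≠ ⊤ := measure_ball_lt_top.ne
  set p : ℝ := (n : ℝ) + 1 with hp
  have hp0 : 0 < p := by positivity
  set M : ℝ := (d ^ (n + 1))⁻¹ with hMdef
  have hM0 : 0 < M := by positivity
  set s : ℝ → ℝ := fun t => t⁻¹ ^ (p⁻¹ : ℝ) with hs
  have hdp : (d ^ (n + 1) : ℝ) ^ (p⁻¹ : ℝ) = d := by
    rw [← Real.rpow_natCast d (n + 1)]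
    rw [← Real.rpow_mul hd.le]
    rw [show ((n + 1 : ℕ) : ℝ) * p⁻¹ = 1 by
      push_cast [hp]; field_simp]
    exact Real.rpow_one d
  -- d < s t for t ∈ Ioo 0 M
  have hds : ∀ t ∈ Ioo (0 : ℝ) M, d < s t := by
    intro t ht
    have h1 : (d ^ (n + 1) : ℝ) < t⁻¹ := by
      rw [hMdef] at ht
      have := ht.2
      have hb : (0:ℝ) < d ^ (n+1) := by positivity
      rw [lt_inv_comm₀ ht.1 hb] at this
      exact this
    calc d = (d ^ (n + 1) : ℝ) ^ (p⁻¹ : ℝ) := hdp.symm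
      _ < t⁻¹ ^ (p⁻¹ : ℝ) := Real.rpow_lt_rpow (by positivity) h1 (by positivity)
  -- (s t) ^ (n+1) = t⁻¹ for t > 0
  have hsp : ∀ t : ℝ, 0 < t → (s t) ^ (n + 1) = t⁻¹ := by
    intro t ht
    rw [hs]
    rw [← Real.rpow_natCast (t⁻¹ ^ (p⁻¹ : ℝ)) (n + 1), ← Real.rpow_mul (by positivity)]
    rw [show p⁻¹ * ((n + 1 : ℕ) : ℝ) = 1 by push_cast [hp]; field_simp]
    exact Real.rpow_one _
  -- s t ^ n = t ^ (-(n/p)) for t > 0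
  have hsn : ∀ t : ℝ, 0 < t → (s t) ^ n = t ^ (-(n / p) : ℝ) := by
    intro t ht
    rw [hs, ← Real.rpow_natCast (t⁻¹ ^ (p⁻¹ : ℝ)) n, ← Real.rpow_mul (by positivity),
      Real.inv_rpow ht.le, ← Real.rpow_neg ht.le]
    congr 1; ring
  have hfm : Measurable fun y : EuclideanSpace ℝ (Fin n) => (dist x y ^ (n + 1))⁻¹ :=
    ((measurable_const.dist measurable_id).pow_const (n + 1)).inv
  rw [lintegral_eq_lintegral_meas_lt _ (Filter.Eventually.of_forall fun y => by positivity)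
    hfm.aemeasurable]
  have hbound : ∀ t ∈ Ioi (0 : ℝ),
      (volume.restrict (ball x d)ᶜ) {a : EuclideanSpace ℝ (Fin n) | t < (dist x a ^ (n + 1))⁻¹} ≤
        (Ioo 0 M).indicator (fun t => ENNReal.ofReal (s t ^ n - d ^ n) * volB) t := by
    intro t ht
    have ht : (0:ℝ) < t := ht
    have hsetm : MeasurableSet {a : EuclideanSpace ℝ (Fin n) | t < (dist x a ^ (n + 1))⁻¹} :=
      measurableSet_lt measurable_const hfm
    rw [Measure.restrict_apply hsetm]
    by_cases htM : t < M
    · rw [indicator_of_mem (show t ∈ Ioo 0 M from ⟨ht, htM⟩)]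
      have hdst := hds t ⟨ht, htM⟩
      have hsub2 : {a : EuclideanSpace ℝ (Fin n) | t < (dist x a ^ (n + 1))⁻¹} ∩ (ball x d)ᶜ ⊆
          ball x (s t) \ ball x d := by
        rintro a ⟨ha1, ha2⟩
        refine ⟨?_, ha2⟩
        have hda : d ≤ dist x a := by
          rw [dist_comm]; exact not_lt.1 fun h => ha2 (mem_ball.2 h)
        have hdista : (0:ℝ) < dist x a := hd.trans_le hda
        have hb : (0:ℝ) < dist x a ^ (n + 1) := pow_pos hdista (n + 1)
        have h2 : dist x a ^ (n + 1) < t⁻¹ := (lt_inv_comm₀ ht hb).1 ha1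
        rw [← hsp t ht] at h2
        have := lt_of_pow_lt_pow_left₀ (n + 1) (Real.rpow_nonneg (by positivity) _) h2
        rw [mem_ball, dist_comm]
        exact this
      calc volume ({a : EuclideanSpace ℝ (Fin n) | t < (dist x a ^ (n + 1))⁻¹} ∩ (ball x d)ᶜ)
          ≤ volume (ball x (s t) \ ball x d) := measure_mono hsub2
        _ = volume (ball x (s t)) - volume (ball x d) :=
            measure_diff (ball_subset_ball hdst.le)
              measurableSet_ball.nullMeasurableSet measure_ball_lt_top.ne
        _ = ENNReal.ofReal (s t ^ n) * volB - ENNReal.ofReal (d ^ n) * volB := by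
            rw [Measure.addHaar_ball _ _ (hd.le.trans hdst.le),
              Measure.addHaar_ball _ _ hd.le, finrank_euclideanSpace_fin]
        _ = ENNReal.ofReal (s t ^ n - d ^ n) * volB := by
            rw [ENNReal.ofReal_sub _ (by positivity),
              ENNReal.sub_mul (fun _ _ => hvolBne)]
    · rw [indicator_of_notMem (fun hmem : t ∈ Ioo 0 M => htM hmem.2)]
      have hempty : {a : EuclideanSpace ℝ (Fin n) | t < (dist x a ^ (n + 1))⁻¹} ∩ (ball x d)ᶜ = ∅ := by
        apply eq_empty_iff_forall_notMem.2
        rintro a ⟨ha1, ha2⟩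
        have hda : d ≤ dist x a := by
          rw [dist_comm]; exact not_lt.1 fun h => ha2 (mem_ball.2 h)
        have hle : (dist x a ^ (n + 1))⁻¹ ≤ M := by
          rw [hMdef]; gcongr
        exact absurd ha1 (not_lt.2 (hle.trans (not_lt.1 htM)))
      simp [hempty]
  have hr : (-1 : ℝ) < -((n : ℝ) / p) := by
    have h1 : (n : ℝ) / p < 1 := (div_lt_one hp0).2 (by rw [hp]; linarith)
    linarith
  calc ∫⁻ t in Ioi (0:ℝ), (volume.restrict (ball x d)ᶜ) {a : EuclideanSpace ℝ (Fin n) | t < (dist x a ^ (n + 1))⁻¹}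
      ≤ ∫⁻ t in Ioi (0:ℝ),
          (Ioo 0 M).indicator (fun t => ENNReal.ofReal (s t ^ n - d ^ n) * volB) t :=
        lintegral_mono_ae ((ae_restrict_iff' measurableSet_Ioi).2
          (Filter.Eventually.of_forall hbound))
    _ = ∫⁻ t in Ioo 0 M, ENNReal.ofReal (s t ^ n - d ^ n) * volB := by
        rw [lintegral_indicator measurableSet_Ioo,
          Measure.restrict_restrict measurableSet_Ioo,
          inter_eq_left.2 (fun t ht => ht.1)]
    _ = (∫⁻ t in Ioo 0 M, ENNReal.ofReal (s t ^ n - d ^ n)) * volB :=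
        lintegral_mul_const' volB _ hvolBne
    _ = (∫⁻ t in Ioo 0 M, ENNReal.ofReal (t ^ (-((n:ℝ) / p) : ℝ) - d ^ n)) * volB := by
        congr 1
        refine setLIntegral_congr_fun measurableSet_Ioo
          (fun t ht => ?_)
        rw [hsn t ht.1]
    _ = ENNReal.ofReal (∫ t in Ioo 0 M, (t ^ (-((n:ℝ) / p) : ℝ) - d ^ n)) * volB := by
        congr 1
        refine (ofReal_integral_eq_lintegral_ofReal ?_ ?_).symm
        · exact (((intervalIntegral.intervalIntegrable_rpow' hr).1).mono_set
            Ioo_subset_Ioc_self).sub (integrableOn_const measure_Ioo_lt_top.ne)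
        · filter_upwards [ae_restrict_mem measurableSet_Ioo] with t htt
          simp only [Pi.zero_apply]
          have h1 := hds t htt
          have h2 : d ^ n ≤ s t ^ n := pow_le_pow_left₀ hd.le h1.le n
          rw [hsn t htt.1] at h2
          linarith
    _ = ENNReal.ofReal ((n : ℝ) / d) * volB := by
        congr 2
        rw [← integral_Ioc_eq_integral_Ioo, ← intervalIntegral.integral_of_le hM0.le,
          intervalIntegral.integral_sub (intervalIntegral.intervalIntegrable_rpow' hr)
            intervalIntegrable_const,
          integral_rpow (Or.inl hr), intervalIntegral.integral_const]
        have h1 : -((n:ℝ)/p) + 1 = p⁻¹ := by rw [hp]; field_simp; ring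
        rw [h1]
        have h2 : M ^ ((p:ℝ)⁻¹) = d⁻¹ := by
          rw [hMdef, Real.inv_rpow (by positivity), hdp]
        rw [h2, Real.zero_rpow (by positivity : ((p:ℝ)⁻¹) ≠ 0), hMdef]
        have hd' : d ≠ 0 := hd.ne'
        have hdn : (d:ℝ) ^ (n+1) ≠ 0 := by positivity
        rw [hp] at hp0 ⊢
        field_simp
        have key : d * d ^ n * d⁻¹ * d⁻¹ ^ n = 1 := by
          rw [show d * d ^ n * d⁻¹ * d⁻¹ ^ n = (d * d⁻¹) * (d * d⁻¹) ^ n by ring,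
            mul_inv_cancel₀ hd']; simp
        linear_combination (-1:ℝ) * key
    _ ≤ surfaceAreaUnitSphere n / ENNReal.ofReal d := by
        rw [ENNReal.ofReal_div_of_pos hd, ENNReal.ofReal_natCast, surfaceAreaUnitSphere,
          div_eq_mul_inv, div_eq_mul_inv]
        exact le_of_eq (by ring)

lemma cross_bound (n : ℕ) (hn : 1 ≤ n) {O' : Set (EuclideanSpace ℝ (Fin n))}
    (hO' : IsOpen O') (hO'bdd : Bornology.IsBounded O')
    {x : EuclideanSpace ℝ (Fin n)} (hx : x ∈ O') {c : ℝ} (hc : 0 ≤ c)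
    {S : Set (EuclideanSpace ℝ (Fin n))} (hS : S ⊆ O'ᶜ) :
    ∫⁻ y in S, ENNReal.ofReal (c / dist x y ^ (n + 1)) ≤
      surfaceAreaUnitSphere n * ENNReal.ofReal (c / infDist x O'ᶜ) := by
  have h0 : 0 < Module.finrank ℝ (EuclideanSpace ℝ (Fin n)) := by
    rw [finrank_euclideanSpace_fin]; omega
  haveI := Module.nontrivial_of_finrank_pos h0
  have hne : O'ᶜ.Nonempty := by
    by_contra h
    rw [not_nonempty_iff_eq_empty, compl_empty_iff] at h
    rw [h] at hO'bdd
    exact absurd hO'bdd (NormedSpace.unbounded_univ ℝ _)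
  have hd : 0 < infDist x O'ᶜ :=
    (hO'.isClosed_compl.notMem_iff_infDist_pos hne).1 (by simp [hx])
  have hSball : S ⊆ (ball x (infDist x O'ᶜ))ᶜ := by
    intro y hy
    simp only [mem_compl_iff, mem_ball]
    exact not_lt.2 (by rw [dist_comm]; exact infDist_le_dist_of_mem (hS hy))
  calc ∫⁻ y in S, ENNReal.ofReal (c / dist x y ^ (n + 1))
      ≤ ∫⁻ y in (ball x (infDist x O'ᶜ))ᶜ, ENNReal.ofReal (c / dist x y ^ (n + 1)) :=
        lintegral_mono_set hSball
    _ = ∫⁻ y in (ball x (infDist x O'ᶜ))ᶜ,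
          ENNReal.ofReal c * ENNReal.ofReal ((dist x y ^ (n + 1))⁻¹) :=
        lintegral_congr fun y => by rw [div_eq_mul_inv, ENNReal.ofReal_mul hc]
    _ = ENNReal.ofReal c *
          ∫⁻ y in (ball x (infDist x O'ᶜ))ᶜ, ENNReal.ofReal ((dist x y ^ (n + 1))⁻¹) :=
        lintegral_const_mul' _ _ ofReal_ne_top
    _ ≤ ENNReal.ofReal c * (surfaceAreaUnitSphere n / ENNReal.ofReal (infDist x O'ᶜ)) :=
        mul_le_mul_right (key_kernel n hn x hd) _
    _ = surfaceAreaUnitSphere n * ENNReal.ofReal (c / infDist x O'ᶜ) := by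
        rw [ENNReal.ofReal_div_of_pos hd, div_eq_mul_inv, div_eq_mul_inv]
        ring

/-- If `u` vanishes a.e. on `O ∖ O'` for bounded open sets `O' ⊆ O ⊆ ℝⁿ`, then
`∬_{O×O} |u(x)−u(y)|²/|x−y|^{n+1} ≤ ∬_{O'×O'} |u(x)−u(y)|²/|x−y|^{n+1}
  + 2 ω_n ∫_{O'} |u(x)|²/dist(x,∂O') dx`. -/
theorem gagliardo_half_le (n : ℕ) (hn : 1 ≤ n)
    (O O' : Set (EuclideanSpace ℝ (Fin n)))
    (hO : IsOpen O) (hObdd : Bornology.IsBounded O)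
    (hO' : IsOpen O') (hO'bdd : Bornology.IsBounded O') (hsub : O' ⊆ O)
    (u : EuclideanSpace ℝ (Fin n) → ℝ) (hu : Measurable u)
    (hzero : ∀ᵐ x ∂(volume.restrict (O \ O')), u x = 0) :
    (∫⁻ x in O, ∫⁻ y in O, ENNReal.ofReal ((u x - u y) ^ 2 / dist x y ^ (n + 1))) ≤
      (∫⁻ x in O', ∫⁻ y in O', ENNReal.ofReal ((u x - u y) ^ 2 / dist x y ^ (n + 1))) +
        2 * surfaceAreaUnitSphere n *
          ∫⁻ x in O', ENNReal.ofReal ((u x) ^ 2 / infDist x O'ᶜ) := by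
  set F : EuclideanSpace ℝ (Fin n) → EuclideanSpace ℝ (Fin n) → ℝ≥0∞ :=
    fun a b => ENNReal.ofReal ((u a - u b) ^ 2 / dist a b ^ (n + 1)) with hF
  set ω := surfaceAreaUnitSphere n with hω
  have hωne : ω ≠ ⊤ :=
    ENNReal.mul_ne_top (ENNReal.natCast_ne_top n) measure_ball_lt_top.ne
  set T := ∫⁻ x in O', ENNReal.ofReal ((u x) ^ 2 / infDist x O'ᶜ) with hT
  have hmD : MeasurableSet (O \ O') := hO.measurableSet.diff hO'.measurableSet
  have hdisj : Disjoint O' (O \ O') := disjoint_sdiff_self_right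
  have hcup : O' ∪ (O \ O') = O := union_diff_cancel hsub
  have hFm : Measurable fun q : EuclideanSpace ℝ (Fin n) × EuclideanSpace ℝ (Fin n) =>
      F q.1 q.2 :=
    ((((hu.comp measurable_fst).sub (hu.comp measurable_snd)).pow_const 2).div
      (measurable_dist.pow_const (n + 1))).ennreal_ofReal
  have hHm : Measurable fun q : EuclideanSpace ℝ (Fin n) × EuclideanSpace ℝ (Fin n) =>
      ENNReal.ofReal ((u q.2) ^ 2 / dist q.1 q.2 ^ (n + 1)) :=
    (((hu.comp measurable_snd).pow_const 2).div
      (measurable_dist.pow_const (n + 1))).ennreal_ofReal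
  have hinner : ∀ g : EuclideanSpace ℝ (Fin n) → ℝ≥0∞,
      ∫⁻ y in O, g y = (∫⁻ y in O', g y) + ∫⁻ y in O \ O', g y := by
    intro g
    have h := lintegral_union (μ := volume) (f := g) hmD hdisj
    rwa [hcup] at h
  have hG1m : Measurable fun x => ∫⁻ y in O', F x y :=
    Measurable.lintegral_prod_right' hFm
  have hGm : Measurable fun x : EuclideanSpace ℝ (Fin n) =>
      ω * ENNReal.ofReal ((u x) ^ 2 / infDist x O'ᶜ) :=
    (((hu.pow_const 2).div (continuous_infDist_pt O'ᶜ).measurable).ennreal_ofReal).const_mul ω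
  -- bound for A2
  have hA2 : (∫⁻ x in O', ∫⁻ y in O \ O', F x y) ≤ ω * T := by
    calc (∫⁻ x in O', ∫⁻ y in O \ O', F x y)
        ≤ ∫⁻ x in O', ω * ENNReal.ofReal ((u x) ^ 2 / infDist x O'ᶜ) := by
          refine setLIntegral_mono hGm fun x hx => ?_
          have h1 : (∫⁻ y in O \ O', F x y) =
              ∫⁻ y in O \ O', ENNReal.ofReal ((u x) ^ 2 / dist x y ^ (n + 1)) := by
            apply lintegral_congr_ae
            filter_upwards [hzero] with y hy
            simp only [hF]; rw [hy, sub_zero]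
          rw [h1]
          exact cross_bound n hn hO' hO'bdd hx (sq_nonneg _) fun y hy => hy.2
      _ = ω * T := lintegral_const_mul' _ _ hωne
  -- B2 = 0
  have hB2 : (∫⁻ x in O \ O', ∫⁻ y in O \ O', F x y) = 0 := by
    have h : ∀ᵐ x ∂volume.restrict (O \ O'), (∫⁻ y in O \ O', F x y) = 0 := by
      filter_upwards [hzero] with x hx
      have h2 : ∀ᵐ y ∂volume.restrict (O \ O'), F x y = 0 := by
        filter_upwards [hzero] with y hy
        simp only [hF]; rw [hx, hy]; simp
      calc (∫⁻ y in O \ O', F x y) = ∫⁻ _ in O \ O', (0 : ℝ≥0∞) := lintegral_congr_ae h2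
        _ = 0 := lintegral_zero
    calc (∫⁻ x in O \ O', ∫⁻ y in O \ O', F x y) = ∫⁻ _ in O \ O', (0 : ℝ≥0∞) :=
        lintegral_congr_ae h
      _ = 0 := lintegral_zero
  -- bound for B1
  have hB1 : (∫⁻ x in O \ O', ∫⁻ y in O', F x y) ≤ ω * T := by
    have h1 : (∫⁻ x in O \ O', ∫⁻ y in O', F x y) =
        ∫⁻ x in O \ O', ∫⁻ y in O', ENNReal.ofReal ((u y) ^ 2 / dist x y ^ (n + 1)) := by
      apply lintegral_congr_ae
      filter_upwards [hzero] with x hx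
      exact lintegral_congr fun y => by simp only [hF]; rw [hx, zero_sub, neg_sq]
    rw [h1, lintegral_lintegral_swap hHm.aemeasurable]
    calc (∫⁻ y in O', ∫⁻ x in O \ O', ENNReal.ofReal ((u y) ^ 2 / dist x y ^ (n + 1)))
        ≤ ∫⁻ y in O', ω * ENNReal.ofReal ((u y) ^ 2 / infDist y O'ᶜ) := by
          refine setLIntegral_mono hGm fun y hy => ?_
          have h2 : (∫⁻ x in O \ O', ENNReal.ofReal ((u y) ^ 2 / dist x y ^ (n + 1))) =
              ∫⁻ x in O \ O', ENNReal.ofReal ((u y) ^ 2 / dist y x ^ (n + 1)) :=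
            lintegral_congr fun x => by rw [dist_comm]
          rw [h2]
          exact cross_bound n hn hO' hO'bdd hy (sq_nonneg _) fun z hz => hz.2
      _ = ω * T := lintegral_const_mul' _ _ hωne
  calc (∫⁻ x in O, ∫⁻ y in O, F x y)
      = (∫⁻ x in O', ∫⁻ y in O, F x y) + ∫⁻ x in O \ O', ∫⁻ y in O, F x y := hinner _
    _ = ((∫⁻ x in O', ∫⁻ y in O', F x y) + ∫⁻ x in O', ∫⁻ y in O \ O', F x y) +
        ((∫⁻ x in O \ O', ∫⁻ y in O', F x y) + ∫⁻ x in O \ O', ∫⁻ y in O \ O', F x y) := by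
        congr 1
        · rw [lintegral_congr fun x => hinner fun y => F x y]
          exact lintegral_add_left hG1m _
        · rw [lintegral_congr fun x => hinner fun y => F x y]
          exact lintegral_add_left hG1m _
    _ ≤ ((∫⁻ x in O', ∫⁻ y in O', F x y) + ω * T) + (ω * T + 0) := by
        exact add_le_add (add_le_add_right hA2 _) (add_le_add hB1 hB2.le)
    _ = (∫⁻ x in O', ∫⁻ y in O', F x y) + 2 * ω * T := by
        rw [add_zero, add_assoc, ← two_mul, mul_assoc]
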